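/- In any ∂^ℤ-algebra A, for every f ∈ F := ∫(A), every g ∈ A and every m ∈ ℤ: ∂^m(fg) = f(∂^m g) and ∫(fg) = f(∫g). -/

import Mathlib

/-- In any ∂^ℤ-algebra `A`, for every `f ∈ F := ∫(A)`, every `g ∈ A` and every `m ∈ ℤ`:
`∂^m (f * g) = f * ∂^m g` and `∫(f * g) = f * ∫ g`.  Here `∫ f := f - ∂⁰ f`. -/
theorem dZ_algebra_F_linear
    {A : Type*} [CommRing A] [Algebra ℝ A]
    (D : ℤ → A →ₗ[ℝ] A)
    (hD_comp : ∀ (m n : ℤ) (f : A), D m (D n f) = D (m + n) f)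
    (hD_leibniz : ∀ f g : A, D 1 (f * g) = D 1 f * g + f * D 1 g)
    (hD_parts : ∀ f g : A, D (-1) ((f - D 0 f) * g) = (f - D 0 f) * D (-1) g)
    (F : Set A) (hF : F = Set.range (fun f : A => f - D 0 f)) :
    ∀ f ∈ F, ∀ (g : A) (m : ℤ),
      D m (f * g) = f * D m g
      ∧ (f * g - D 0 (f * g)) = f * (g - D 0 g) := by
  intro f hf g m
  rw [hF] at hf
  obtain ⟨h, rfl⟩ := hf
  set f := h - D 0 h with hfdef
  -- ∂⁰ f = 0
  have hf0 : D 0 f = 0 := by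
    have h00 := hD_comp 0 0 h
    rw [hfdef, map_sub, h00]
    exact sub_self _
  -- ∂ᵐ f = 0 for all m
  have hDm : ∀ k : ℤ, D k f = 0 := by
    intro k
    have hk := hD_comp k 0 f
    rw [hf0, map_zero] at hk
    simpa using hk.symm
  -- f - ∂⁰ f = f
  have hff : f - D 0 f = f := by rw [hf0, sub_zero]
  -- m = -1 case
  have hm1 : ∀ x : A, D (-1) (f * x) = f * D (-1) x := by
    intro x
    have := hD_parts f x
    rwa [hff] at this
  -- m = 1 case
  have h1 : ∀ x : A, D 1 (f * x) = f * D 1 x := by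
    intro x
    rw [hD_leibniz, hDm 1]
    ring
  -- m = 0 case
  have h0 : ∀ x : A, D 0 (f * x) = f * D 0 x := by
    intro x
    have e1 := hD_comp (-1) 1 (f * x)
    norm_num at e1
    have e2 := hD_comp (-1) 1 x
    norm_num at e2
    rw [← e1, h1, hm1, e2]
  -- general case by induction
  have key : ∀ k : ℤ, D k (f * g) = f * D k g := by
    intro k
    induction k using Int.induction_on with
    | zero => exact h0 g
    | succ n ih =>
        have e1 := hD_comp 1 n (f * g)
        have e2 := hD_comp 1 n g
        rw [show (1 : ℤ) + n = n + 1 by ring] at e1 e2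
        rw [← e1, ih, h1, e2]
    | pred n ih =>
        have e1 := hD_comp (-1) (-n) (f * g)
        have e2 := hD_comp (-1) (-n) g
        rw [show (-1 : ℤ) + -n = -n - 1 by ring] at e1 e2
        rw [← e1, ih, hm1, e2]
  refine ⟨key m, ?_⟩
  rw [h0 g]
  ring
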